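/- For every even integer t ≥ 4 and v = 12t+7, the collection consisting of F_{1,i} = {0, 3t+i+1, 2i} for 2 ≤ i ≤ t−2 with i ≠ t/2, F_{2,i} = {0, 5t+i+3, 2i+1} for 1 ≤ i ≤ t−2, together with the seven blocks {0,1,2t−1}, {0,2,4t+2}, {0,2t,4t+1}, {0,2t+2,5t+2}, {0,5t/2+1,6t+2}, {0,t,5t+3}, {0,3t+1,6t+3}, forms a (12t+7,3,1)-perfect difference family: the positive differences cover each element of {1,...,6t+3} exactly once. -/
import Mathlib


/-- The multiset of positive differences of a finite set of naturals. -/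
def posDiffs (B : Finset ℕ) : Multiset ℕ :=
  ((B ×ˢ B).filter (fun p => p.2 < p.1)).val.map (fun p => p.1 - p.2)

/-- `F` is a `(v,k,λ)`-perfect difference family. -/
def IsPDF (v k lam : ℕ) (F : Multiset (Finset ℕ)) : Prop :=
  Odd v ∧ (∀ B ∈ F, B.card = k ∧ B ⊆ Finset.range v) ∧
  ∀ d ∈ Finset.Icc 1 ((v - 1) / 2), (F.bind posDiffs).count d = lam

theorem posDiffs_triple (a b : ℕ) (h1 : 0 < b) (h2 : b < a) :
    posDiffs {0, a, b} = {a, b, a - b} := by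
  have hab : a ≠ b := by omega
  unfold posDiffs
  have hf : (({0, a, b} : Finset ℕ) ×ˢ {0, a, b}).filter (fun p => p.2 < p.1)
      = {(a,0),(a,b),(b,0)} := by
    ext p
    simp only [Finset.mem_filter, Finset.mem_product, Finset.mem_insert,
      Finset.mem_singleton, Prod.ext_iff]
    obtain ⟨x, y⟩ := p
    constructor
    · rintro ⟨⟨hx, hy⟩, hlt⟩; omega
    · rintro h; omega
  rw [hf]
  have hval : ({(a,0),(a,b),(b,0)} : Finset (ℕ×ℕ)).val = {(a,0),(a,b),(b,0)} := by
    rw [Finset.insert_val, Finset.insert_val]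
    rw [Multiset.ndinsert_of_notMem (by simp [Prod.ext_iff]; omega),
        Multiset.ndinsert_of_notMem (by simp [Prod.ext_iff]; omega)]
    rfl
  rw [hval]
  show (a - 0) ::ₘ (a - b) ::ₘ {b - 0} = _
  rw [Nat.sub_zero, Nat.sub_zero]
  rw [show ((a-b) ::ₘ {b} : Multiset ℕ) = b ::ₘ {a-b} from Multiset.cons_swap _ _ _]
  rfl

theorem pair_reorder (a b : ℕ) : ({0, a, b} : Finset ℕ) = {0, b, a} := by
  rw [Finset.pair_comm a b]

set_option maxHeartbeats 2000000 in
/-- For every even `t ≥ 4`, the blocks `{0, 3t+i+1, 2i}` (`2 ≤ i ≤ t−2`, `i ≠ t/2`),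
`{0, 5t+i+3, 2i+1}` (`1 ≤ i ≤ t−2`), together with the seven sporadic blocks,
form a `(12t+7,3,1)`-perfect difference family. -/
theorem stmt8 (t : ℕ) (ht : Even t) (ht4 : 4 ≤ t) :
    IsPDF (12 * t + 7) 3 1
      ((((Finset.Icc 2 (t - 2)).erase (t / 2)).val.map
          (fun i => ({0, 3 * t + i + 1, 2 * i} : Finset ℕ))) +
       ((Finset.Icc 1 (t - 2)).val.map
          (fun i => ({0, 5 * t + i + 3, 2 * i + 1} : Finset ℕ))) +
       ({({0, 1, 2 * t - 1} : Finset ℕ), {0, 2, 4 * t + 2}, {0, 2 * t, 4 * t + 1},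
         {0, 2 * t + 2, 5 * t + 2}, {0, 5 * t / 2 + 1, 6 * t + 2},
         {0, t, 5 * t + 3}, {0, 3 * t + 1, 6 * t + 3}} : Multiset (Finset ℕ))) := by
  have ht2 : t % 2 = 0 := Nat.even_iff.mp ht
  set F := ((((Finset.Icc 2 (t - 2)).erase (t / 2)).val.map
          (fun i => ({0, 3 * t + i + 1, 2 * i} : Finset ℕ))) +
       ((Finset.Icc 1 (t - 2)).val.map
          (fun i => ({0, 5 * t + i + 3, 2 * i + 1} : Finset ℕ))) +
       ({({0, 1, 2 * t - 1} : Finset ℕ), {0, 2, 4 * t + 2}, {0, 2 * t, 4 * t + 1},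
         {0, 2 * t + 2, 5 * t + 2}, {0, 5 * t / 2 + 1, 6 * t + 2},
         {0, t, 5 * t + 3}, {0, 3 * t + 1, 6 * t + 3}} : Multiset (Finset ℕ))) with hF
  -- structure lemma
  have hB : ∀ B ∈ F, ∃ a b, 0 < b ∧ b < a ∧ a ≤ 6 * t + 3 ∧ B = {0, a, b} := by
    intro B hBmem
    rw [hF] at hBmem
    simp only [Multiset.mem_add, Multiset.mem_map, Finset.mem_val, Finset.mem_erase,
      Finset.mem_Icc, Multiset.insert_eq_cons, Multiset.mem_cons, Multiset.mem_singleton] at hBmem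
    rcases hBmem with ((⟨i, ⟨hi1, hi2, hi3⟩, rfl⟩ | ⟨i, ⟨hi1, hi2⟩, rfl⟩) | h)
    · exact ⟨3*t+i+1, 2*i, by omega, by omega, by omega, rfl⟩
    · exact ⟨5*t+i+3, 2*i+1, by omega, by omega, by omega, rfl⟩
    · rcases h with rfl | rfl | rfl | rfl | rfl | rfl | rfl
      · exact ⟨2*t-1, 1, by omega, by omega, by omega, pair_reorder _ _⟩
      · exact ⟨4*t+2, 2, by omega, by omega, by omega, pair_reorder _ _⟩
      · exact ⟨4*t+1, 2*t, by omega, by omega, by omega, pair_reorder _ _⟩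
      · exact ⟨5*t+2, 2*t+2, by omega, by omega, by omega, pair_reorder _ _⟩
      · exact ⟨6*t+2, 5*t/2+1, by omega, by omega, by omega, pair_reorder _ _⟩
      · exact ⟨5*t+3, t, by omega, by omega, by omega, pair_reorder _ _⟩
      · exact ⟨6*t+3, 3*t+1, by omega, by omega, by omega, pair_reorder _ _⟩
  set M := F.bind posDiffs with hM
  -- membership helpers
  have hPD : ∀ a b x : ℕ, 0 < b → b < a → (x = a ∨ x = b ∨ x = a - b) →
      x ∈ posDiffs {0, a, b} := by
    intro a b x h1 h2 hx
    rw [posDiffs_triple a b h1 h2]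
    simp only [Multiset.insert_eq_cons, Multiset.mem_cons, Multiset.mem_singleton]
    exact hx
  have hMem : ∀ B ∈ F, ∀ x ∈ posDiffs B, x ∈ M := by
    intro B hBm x hx
    exact Multiset.mem_bind.2 ⟨B, hBm, hx⟩
  have hF1 : ∀ i, 2 ≤ i → i ≤ t - 2 → i ≠ t / 2 →
      ({0, 3 * t + i + 1, 2 * i} : Finset ℕ) ∈ F := by
    intro i h1 h2 h3
    rw [hF]
    simp only [Multiset.mem_add, Multiset.mem_map, Finset.mem_val, Finset.mem_erase,
      Finset.mem_Icc]
    exact Or.inl (Or.inl ⟨i, ⟨h3, h1, h2⟩, rfl⟩)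
  have hF2 : ∀ i, 1 ≤ i → i ≤ t - 2 →
      ({0, 5 * t + i + 3, 2 * i + 1} : Finset ℕ) ∈ F := by
    intro i h1 h2
    rw [hF]
    simp only [Multiset.mem_add, Multiset.mem_map, Finset.mem_val, Finset.mem_Icc]
    exact Or.inl (Or.inr ⟨i, ⟨h1, h2⟩, rfl⟩)
  have hSp : ∀ B : Finset ℕ, (B = {0, 1, 2*t-1} ∨ B = {0, 2, 4*t+2} ∨ B = {0, 2*t, 4*t+1} ∨
      B = {0, 2*t+2, 5*t+2} ∨ B = {0, 5*t/2+1, 6*t+2} ∨ B = {0, t, 5*t+3} ∨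
      B = {0, 3*t+1, 6*t+3}) → B ∈ F := by
    intro B hb
    rw [hF]
    simp only [Multiset.mem_add, Multiset.insert_eq_cons, Multiset.mem_cons, Multiset.mem_singleton]
    tauto
  -- coverage
  have hcov : ∀ d, 1 ≤ d → d ≤ 6 * t + 3 → d ∈ M := by
    intro d hd1 hd2
    -- sporadic cases
    by_cases c1 : d = 1 ∨ d = 2*t-1 ∨ d = 2*t-2
    · exact hMem _ (hSp _ (Or.inl rfl)) d
        (pair_reorder 1 (2*t-1) ▸ hPD (2*t-1) 1 d (by omega) (by omega) (by omega))
    by_cases c2 : d = 2 ∨ d = 4*t+2 ∨ d = 4*t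
    · exact hMem _ (hSp _ (Or.inr (Or.inl rfl))) d
        (pair_reorder 2 (4*t+2) ▸ hPD (4*t+2) 2 d (by omega) (by omega) (by omega))
    by_cases c3 : d = 2*t ∨ d = 4*t+1 ∨ d = 2*t+1
    · exact hMem _ (hSp _ (Or.inr (Or.inr (Or.inl rfl)))) d
        (pair_reorder (2*t) (4*t+1) ▸ hPD (4*t+1) (2*t) d (by omega) (by omega) (by omega))
    by_cases c4 : d = 2*t+2 ∨ d = 5*t+2 ∨ d = 3*t
    · exact hMem _ (hSp _ (Or.inr (Or.inr (Or.inr (Or.inl rfl))))) d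
        (pair_reorder (2*t+2) (5*t+2) ▸ hPD (5*t+2) (2*t+2) d (by omega) (by omega) (by omega))
    by_cases c5 : d = 5*t/2+1 ∨ d = 6*t+2 ∨ d = 6*t+2 - (5*t/2+1)
    · exact hMem _ (hSp _ (Or.inr (Or.inr (Or.inr (Or.inr (Or.inl rfl)))))) d
        (pair_reorder (5*t/2+1) (6*t+2) ▸ hPD (6*t+2) (5*t/2+1) d (by omega) (by omega) (by omega))
    by_cases c6 : d = t ∨ d = 5*t+3 ∨ d = 4*t+3
    · exact hMem _ (hSp _ (Or.inr (Or.inr (Or.inr (Or.inr (Or.inr (Or.inl rfl))))))) d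
        (pair_reorder t (5*t+3) ▸ hPD (5*t+3) t d (by omega) (by omega) (by omega))
    by_cases c7 : d = 3*t+1 ∨ d = 6*t+3 ∨ d = 3*t+2
    · exact hMem _ (hSp _ (Or.inr (Or.inr (Or.inr (Or.inr (Or.inr (Or.inr rfl))))))) d
        (pair_reorder (3*t+1) (6*t+3) ▸ hPD (6*t+3) (3*t+1) d (by omega) (by omega) (by omega))
    push_neg at c1 c2 c3 c4 c5 c6 c7
    -- family cases
    by_cases r1 : d ≤ 2*t - 2 ∧ d % 2 = 1
    · -- F2, b-diff, i = (d-1)/2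
      refine hMem _ (hF2 ((d-1)/2) (by omega) (by omega)) d
        (hPD _ _ d (by omega) (by omega) (by omega))
    by_cases r2 : d ≤ 2*t - 2 ∧ d % 2 = 0
    · -- F1, b-diff, i = d/2
      refine hMem _ (hF1 (d/2) (by omega) (by omega) (by omega)) d
        (hPD _ _ d (by omega) (by omega) (by omega))
    by_cases r3 : 2*t+3 ≤ d ∧ d ≤ 3*t-1
    · -- F1, third diff, i = 3t+1-d
      refine hMem _ (hF1 (3*t+1-d) (by omega) (by omega) (by omega)) d
        (hPD _ _ d (by omega) (by omega) (by omega))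
    by_cases r4 : 3*t+3 ≤ d ∧ d ≤ 4*t-1
    · -- F1, a-diff, i = d-3t-1
      refine hMem _ (hF1 (d-(3*t+1)) (by omega) (by omega) (by omega)) d
        (hPD _ _ d (by omega) (by omega) (by omega))
    by_cases r5 : 4*t+4 ≤ d ∧ d ≤ 5*t+1
    · -- F2, third diff, i = 5t+2-d
      refine hMem _ (hF2 (5*t+2-d) (by omega) (by omega)) d
        (hPD _ _ d (by omega) (by omega) (by omega))
    -- F2, a-diff, i = d-5t-3
    refine hMem _ (hF2 (d-(5*t+3)) (by omega) (by omega)) d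
      (hPD _ _ d (by omega) (by omega) (by omega))
  -- upper/lower bound on elements of M
  have hsub : ∀ d ∈ M, 1 ≤ d ∧ d ≤ 6 * t + 3 := by
    intro d hd
    obtain ⟨B, hBm, hdB⟩ := Multiset.mem_bind.1 hd
    obtain ⟨a, b, h1, h2, h3, rfl⟩ := hB B hBm
    rw [posDiffs_triple a b h1 h2] at hdB
    simp only [Multiset.insert_eq_cons, Multiset.mem_cons, Multiset.mem_singleton] at hdB
    omega
  -- cardinality
  have hcard : M.card = 6 * t + 3 := by
    rw [hM, Multiset.card_bind]
    have hmapeq : F.map (Multiset.card ∘ posDiffs) = F.map (fun _ => 3) := by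
      apply Multiset.map_congr rfl
      intro B hBm
      obtain ⟨a, b, h1, h2, h3, rfl⟩ := hB B hBm
      rw [Function.comp_apply, posDiffs_triple a b h1 h2]
      rfl
    rw [hmapeq, Multiset.map_const', Multiset.sum_replicate, smul_eq_mul]
    have hcF : Multiset.card F = 2 * t + 1 := by
      rw [hF]
      simp only [Multiset.card_add, Multiset.card_map, Multiset.insert_eq_cons,
        Multiset.card_cons, Multiset.card_singleton]
      have h1 : ((Finset.Icc 2 (t-2)).erase (t/2)).val.card
          = ((Finset.Icc 2 (t-2)).erase (t/2)).card := rfl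
      have h2 : (Finset.Icc 1 (t-2)).val.card = (Finset.Icc 1 (t-2)).card := rfl
      rw [h1, h2, Finset.card_erase_of_mem (by simp only [Finset.mem_Icc]; omega),
        Nat.card_Icc, Nat.card_Icc]
      omega
    rw [hcF]
    omega
  -- conclusion
  refine ⟨Nat.odd_iff.mpr (by omega), ?_, ?_⟩
  · intro B hBm
    obtain ⟨a, b, h1, h2, h3, rfl⟩ := hB B hBm
    constructor
    · rw [Finset.card_insert_of_notMem (by simp; omega),
        Finset.card_insert_of_notMem (by simp; omega), Finset.card_singleton]
    · intro x hx
      simp only [Finset.mem_insert, Finset.mem_singleton] at hx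
      simp only [Finset.mem_range]
      omega
  · have he : (12 * t + 7 - 1) / 2 = 6 * t + 3 := by omega
    rw [he]
    have hsum : ∑ d ∈ Finset.Icc 1 (6 * t + 3), M.count d = M.card := by
      rw [← Multiset.toFinset_sum_count_eq M]
      refine (Finset.sum_subset ?_ ?_).symm
      · intro x hx
        rw [Multiset.mem_toFinset] at hx
        have := hsub x hx
        simp only [Finset.mem_Icc]
        omega
      · intro x _ hx
        rw [Multiset.mem_toFinset] at hx
        exact Multiset.count_eq_zero_of_notMem hx
    intro d hd
    by_contra hne
    have hd' : d ∈ M := by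
      simp only [Finset.mem_Icc] at hd
      exact hcov d hd.1 hd.2
    have h1 : 1 ≤ M.count d := Multiset.one_le_count_iff_mem.2 hd'
    have hlt : ∑ x ∈ Finset.Icc 1 (6 * t + 3), 1 < ∑ x ∈ Finset.Icc 1 (6 * t + 3), M.count x := by
      refine Finset.sum_lt_sum ?_ ⟨d, hd, lt_of_le_of_ne h1 (Ne.symm hne)⟩
      intro i hi
      simp only [Finset.mem_Icc] at hi
      exact Multiset.one_le_count_iff_mem.2 (hcov i hi.1 hi.2)
    rw [hsum, hcard, Finset.sum_const, smul_eq_mul, mul_one, Nat.card_Icc] at hlt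
    omega
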